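/- Let f : ℝ² → ℝ be of class C⁴ near the origin with f_{20} = f_{02} = f_{30} = f_{03} = 0 at the origin. Define a : ℝ³ → ℝ by a(x, y, p) = f_{20}(x, y) + 2 f_{11}(x, y) p + f_{02}(x, y) p² and I : ℝ³ → ℝ by I(x, y, p) = (∂a/∂x)(x, y, p) + p (∂a/∂y)(x, y, p). Then the Fréchet derivative at (0, 0, 0) of the map G = (a, I) : ℝ³ → ℝ² is the linear map (ξ, η, π) ↦ ( f_{21} η + 2 f_{11} π , f_{40} ξ + f_{31} η + 3 f_{21} π ), where f_{ij} denotes the value at the origin. -/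

import Mathlib

/-- Partial derivative in the `x` direction. -/
noncomputable def pdx (f : ℝ × ℝ → ℝ) : ℝ × ℝ → ℝ := fun q => fderiv ℝ f q (1, 0)

/-- Partial derivative in the `y` direction. -/
noncomputable def pdy (f : ℝ × ℝ → ℝ) : ℝ × ℝ → ℝ := fun q => fderiv ℝ f q (0, 1)

/-- `pd i j f = ∂^{i+j} f / ∂x^i ∂y^j`. -/
noncomputable def pd (i j : ℕ) (f : ℝ × ℝ → ℝ) : ℝ × ℝ → ℝ := pdx^[i] (pdy^[j] f)

section Helpers

lemma cdx {g : ℝ × ℝ → ℝ} {q : ℝ × ℝ} {n m : WithTop ℕ∞} (h : ContDiffAt ℝ m g q)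
    (hn : n + 1 ≤ m) : ContDiffAt ℝ n (pdx g) q :=
  (h.fderiv_right hn).clm_apply contDiffAt_const

lemma cdy {g : ℝ × ℝ → ℝ} {q : ℝ × ℝ} {n m : WithTop ℕ∞} (h : ContDiffAt ℝ m g q)
    (hn : n + 1 ≤ m) : ContDiffAt ℝ n (pdy g) q :=
  (h.fderiv_right hn).clm_apply contDiffAt_const

/-- derivative of a directional-derivative function, for C² functions -/
lemma hasFDerivAt_pd_dir {g : ℝ × ℝ → ℝ} {q : ℝ × ℝ} (h : ContDiffAt ℝ 2 g q) (v : ℝ × ℝ) :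
    HasFDerivAt (fun y => fderiv ℝ g y v)
      ((ContinuousLinearMap.apply ℝ ℝ v).comp (fderiv ℝ (fderiv ℝ g) q)) q := by
  have hF : DifferentiableAt ℝ (fderiv ℝ g) q := by
    have := h.fderiv_right (m := 1) (by norm_num)
    exact this.differentiableAt one_ne_zero
  exact (ContinuousLinearMap.apply ℝ ℝ v).hasFDerivAt.comp q hF.hasFDerivAt

lemma schwarz {g : ℝ × ℝ → ℝ} {q : ℝ × ℝ} (h : ContDiffAt ℝ 2 g q) :
    pdx (pdy g) q = pdy (pdx g) q := by
  have hsym := h.isSymmSndFDerivAt (n := 2) (by simp [minSmoothness_of_isRCLikeNormedField])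
  have h1 := (hasFDerivAt_pd_dir h ((0:ℝ),(1:ℝ))).fderiv
  have h2 := (hasFDerivAt_pd_dir h ((1:ℝ),(0:ℝ))).fderiv
  show fderiv ℝ (pdy g) q (1,0) = fderiv ℝ (pdx g) q (0,1)
  rw [show pdy g = fun y => fderiv ℝ g y (0,1) from rfl,
      show pdx g = fun y => fderiv ℝ g y (1,0) from rfl, h1, h2]
  simpa using hsym (1,0) (0,1)

lemma schwarz_ev {g : ℝ × ℝ → ℝ} {q : ℝ × ℝ} (h : ContDiffAt ℝ 2 g q) :
    pdx (pdy g) =ᶠ[nhds q] pdy (pdx g) :=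
  (h.eventually (by simp)).mono fun _ hy => schwarz hy

lemma pdx_congr {u v : ℝ × ℝ → ℝ} {q : ℝ × ℝ} (h : u =ᶠ[nhds q] v) :
    pdx u =ᶠ[nhds q] pdx v := by
  have := eventually_eventually_nhds.mpr h
  exact this.mono fun y hy => by
    show fderiv ℝ u y (1,0) = fderiv ℝ v y (1,0)
    rw [Filter.EventuallyEq.fderiv_eq hy]

lemma fderiv_eval2 {u : ℝ × ℝ → ℝ} {q : ℝ × ℝ} (xi eta : ℝ) :
    fderiv ℝ u q (xi, eta) = xi * pdx u q + eta * pdy u q := by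
  have h : ((xi, eta) : ℝ × ℝ) = xi • ((1:ℝ), (0:ℝ)) + eta • ((0:ℝ), (1:ℝ)) := by
    simp [Prod.ext_iff]
  rw [h, map_add, map_smul, map_smul]
  simp [pdx, pdy, smul_eq_mul]

def PP : ℝ × ℝ × ℝ →L[ℝ] ℝ × ℝ :=
  (ContinuousLinearMap.fst ℝ ℝ (ℝ × ℝ)).prod
    ((ContinuousLinearMap.fst ℝ ℝ ℝ).comp (ContinuousLinearMap.snd ℝ ℝ (ℝ × ℝ)))

def QQ : ℝ × ℝ × ℝ →L[ℝ] ℝ :=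
  (ContinuousLinearMap.snd ℝ ℝ ℝ).comp (ContinuousLinearMap.snd ℝ ℝ (ℝ × ℝ))

lemma comb_deriv {u0 u1 u2 : ℝ × ℝ → ℝ} {w : ℝ × ℝ × ℝ}
    (h0 : DifferentiableAt ℝ u0 (w.1, w.2.1)) (h1 : DifferentiableAt ℝ u1 (w.1, w.2.1))
    (h2 : DifferentiableAt ℝ u2 (w.1, w.2.1)) :
    ∃ D : ℝ × ℝ × ℝ →L[ℝ] ℝ,
      HasFDerivAt (fun z : ℝ × ℝ × ℝ =>
        u0 (z.1, z.2.1) + 2 * u1 (z.1, z.2.1) * z.2.2 + u2 (z.1, z.2.1) * z.2.2 ^ 2) D w ∧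
      ∀ v : ℝ × ℝ × ℝ, D v =
        fderiv ℝ u0 (w.1, w.2.1) (v.1, v.2.1)
        + 2 * fderiv ℝ u1 (w.1, w.2.1) (v.1, v.2.1) * w.2.2 + 2 * u1 (w.1, w.2.1) * v.2.2
        + fderiv ℝ u2 (w.1, w.2.1) (v.1, v.2.1) * w.2.2 ^ 2
        + u2 (w.1, w.2.1) * (2 * w.2.2 * v.2.2) := by
  have hP : HasFDerivAt (fun z : ℝ × ℝ × ℝ => (z.1, z.2.1)) PP w := PP.hasFDerivAt
  have hQ : HasFDerivAt (fun z : ℝ × ℝ × ℝ => z.2.2) QQ w := QQ.hasFDerivAt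
  have T0 : HasFDerivAt (fun z : ℝ × ℝ × ℝ => u0 (z.1, z.2.1))
      ((fderiv ℝ u0 (w.1, w.2.1)).comp PP) w := h0.hasFDerivAt.comp w hP
  have T1 : HasFDerivAt (fun z : ℝ × ℝ × ℝ => u1 (z.1, z.2.1))
      ((fderiv ℝ u1 (w.1, w.2.1)).comp PP) w := h1.hasFDerivAt.comp w hP
  have T2 : HasFDerivAt (fun z : ℝ × ℝ × ℝ => u2 (z.1, z.2.1))
      ((fderiv ℝ u2 (w.1, w.2.1)).comp PP) w := h2.hasFDerivAt.comp w hP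
  have hsq : HasFDerivAt (fun z : ℝ × ℝ × ℝ => z.2.2 ^ 2) (w.2.2 • QQ + w.2.2 • QQ) w := by
    have := hQ.mul hQ
    simp only [← pow_two] at this
    exact this
  have hd := (T0.add ((T1.const_mul 2).mul hQ)).add (T2.mul hsq)
  refine ⟨_, hd, fun v => ?_⟩
  simp [ContinuousLinearMap.add_apply, ContinuousLinearMap.smul_apply, smul_eq_mul, QQ, PP,
    ContinuousLinearMap.prod_apply]
  ring

end Helpers

/-- The differential computation in the proof of the Lemma of Section 6 of the paper:
the Fréchet derivative at the origin of `G = (a, I)` is the linear map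
`(ξ, η, π) ↦ (f₂₁ η + 2 f₁₁ π, f₄₀ ξ + f₃₁ η + 3 f₂₁ π)`. -/
theorem fderiv_of_G_at_hyperbonode (f : ℝ × ℝ → ℝ) (hf : ContDiffAt ℝ 4 f 0)
    (h20 : pd 2 0 f 0 = 0) (h02 : pd 0 2 f 0 = 0)
    (h30 : pd 3 0 f 0 = 0) (h03 : pd 0 3 f 0 = 0)
    (a : ℝ × ℝ × ℝ → ℝ)
    (ha : ∀ x y p : ℝ,
      a (x, y, p) = pd 2 0 f (x, y) + 2 * pd 1 1 f (x, y) * p + pd 0 2 f (x, y) * p ^ 2)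
    (I : ℝ × ℝ × ℝ → ℝ)
    (hI : ∀ x y p : ℝ,
      I (x, y, p) = fderiv ℝ a (x, y, p) (1, 0, 0) + p * fderiv ℝ a (x, y, p) (0, 1, 0))
    (G : ℝ × ℝ × ℝ → ℝ × ℝ) (hG : ∀ w, G w = (a w, I w)) :
    ∀ ξ η π' : ℝ,
      fderiv ℝ G (0, 0, 0) (ξ, η, π') =
        (pd 2 1 f 0 * η + 2 * pd 1 1 f 0 * π',
         pd 4 0 f 0 * ξ + pd 3 1 f 0 * η + 3 * pd 2 1 f 0 * π') := by
  intro ξ η π'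
  -- a as an explicit function
  have haE : a = fun z : ℝ × ℝ × ℝ =>
      pdx (pdx f) (z.1, z.2.1) + 2 * pdx (pdy f) (z.1, z.2.1) * z.2.2
        + pdy (pdy f) (z.1, z.2.1) * z.2.2 ^ 2 :=
    funext fun z => ha z.1 z.2.1 z.2.2
  -- smoothness bookkeeping at the origin
  have c3x : ContDiffAt ℝ 3 (pdx f) 0 := cdx hf (by norm_num)
  have c3y : ContDiffAt ℝ 3 (pdy f) 0 := cdy hf (by norm_num)
  have c2xx : ContDiffAt ℝ 2 (pdx (pdx f)) 0 := cdx c3x (by norm_num)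
  have c2xy : ContDiffAt ℝ 2 (pdx (pdy f)) 0 := cdx c3y (by norm_num)
  have c2yy : ContDiffAt ℝ 2 (pdy (pdy f)) 0 := cdy c3y (by norm_num)
  have one_le_two' : (1 : WithTop ℕ∞) + 1 ≤ 2 := by norm_num
  have dxxx : DifferentiableAt ℝ (pdx (pdx (pdx f))) 0 :=
    (cdx c2xx one_le_two').differentiableAt one_ne_zero
  have dyxx : DifferentiableAt ℝ (pdy (pdx (pdx f))) 0 :=
    (cdy c2xx one_le_two').differentiableAt one_ne_zero
  have dxxy : DifferentiableAt ℝ (pdx (pdx (pdy f))) 0 :=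
    (cdx c2xy one_le_two').differentiableAt one_ne_zero
  have dyxy : DifferentiableAt ℝ (pdy (pdx (pdy f))) 0 :=
    (cdy c2xy one_le_two').differentiableAt one_ne_zero
  have dxyy : DifferentiableAt ℝ (pdx (pdy (pdy f))) 0 :=
    (cdx c2yy one_le_two').differentiableAt one_ne_zero
  have dyyy : DifferentiableAt ℝ (pdy (pdy (pdy f))) 0 :=
    (cdy c2yy one_le_two').differentiableAt one_ne_zero
  -- Schwarz identities
  have s1 : pdx (pdy f) =ᶠ[nhds (0 : ℝ × ℝ)] pdy (pdx f) :=
    schwarz_ev (hf.of_le (by norm_num))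
  have s2 : pdx (pdy (pdx f)) =ᶠ[nhds (0 : ℝ × ℝ)] pdy (pdx (pdx f)) :=
    schwarz_ev (c3x.of_le (by norm_num))
  have ev1 : pdx (pdx (pdy f)) =ᶠ[nhds (0 : ℝ × ℝ)] pdy (pdx (pdx f)) := (pdx_congr s1).trans s2
  have E1 : pdy (pdx (pdx f)) 0 = pdx (pdx (pdy f)) 0 := ev1.eq_of_nhds.symm
  have E2 : pdy (pdx (pdx (pdx f))) 0 = pdx (pdx (pdx (pdy f))) 0 :=
    (schwarz c2xx).symm.trans (pdx_congr ev1.symm).eq_of_nhds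
  -- differentiability eventually near the origin
  have hfev : ∀ᶠ q in nhds (0 : ℝ × ℝ), ContDiffAt ℝ 4 f q := hf.eventually (by simp)
  have hproj : ContinuousAt (fun w : ℝ × ℝ × ℝ => (w.1, w.2.1)) (0, 0, 0) :=
    (continuous_fst.prodMk (continuous_fst.comp continuous_snd)).continuousAt
  have hPw : ∀ᶠ w in nhds ((0, 0, 0) : ℝ × ℝ × ℝ), ContDiffAt ℝ 4 f (w.1, w.2.1) :=
    hproj.eventually hfev
  -- the explicit formula for I near the origin
  have hIB : I =ᶠ[nhds ((0, 0, 0) : ℝ × ℝ × ℝ)] fun z : ℝ × ℝ × ℝ =>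
      pdx (pdx (pdx f)) (z.1, z.2.1) + 2 * pdx (pdx (pdy f)) (z.1, z.2.1) * z.2.2
        + pdx (pdy (pdy f)) (z.1, z.2.1) * z.2.2 ^ 2
        + z.2.2 * (pdy (pdx (pdx f)) (z.1, z.2.1) + 2 * pdy (pdx (pdy f)) (z.1, z.2.1) * z.2.2
          + pdy (pdy (pdy f)) (z.1, z.2.1) * z.2.2 ^ 2) := by
    filter_upwards [hPw] with w hw
    have e3x : ContDiffAt ℝ 3 (pdx f) (w.1, w.2.1) := cdx hw (by norm_num)
    have e3y : ContDiffAt ℝ 3 (pdy f) (w.1, w.2.1) := cdy hw (by norm_num)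
    have du0 : DifferentiableAt ℝ (pdx (pdx f)) (w.1, w.2.1) :=
      (cdx e3x (by norm_num : (1 : WithTop ℕ∞) + 1 ≤ 3)).differentiableAt one_ne_zero
    have du1 : DifferentiableAt ℝ (pdx (pdy f)) (w.1, w.2.1) :=
      (cdx e3y (by norm_num : (1 : WithTop ℕ∞) + 1 ≤ 3)).differentiableAt one_ne_zero
    have du2 : DifferentiableAt ℝ (pdy (pdy f)) (w.1, w.2.1) :=
      (cdy e3y (by norm_num : (1 : WithTop ℕ∞) + 1 ≤ 3)).differentiableAt one_ne_zero
    obtain ⟨D, hD, eD⟩ := comb_deriv (w := (w.1, w.2.1, w.2.2)) du0 du1 du2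
    have hDa : HasFDerivAt a D (w.1, w.2.1, w.2.2) := by rw [haE]; exact hD
    show I (w.1, w.2.1, w.2.2) = _
    rw [hI w.1 w.2.1 w.2.2, hDa.fderiv, eD, eD]
    simp only [pdx, pdy]
    norm_num
  -- derivative of a at the origin
  have da0 : DifferentiableAt ℝ (pdx (pdx f)) ((0 : ℝ × ℝ)) := c2xx.differentiableAt two_ne_zero
  have da1 : DifferentiableAt ℝ (pdx (pdy f)) ((0 : ℝ × ℝ)) := c2xy.differentiableAt two_ne_zero
  have da2 : DifferentiableAt ℝ (pdy (pdy f)) ((0 : ℝ × ℝ)) := c2yy.differentiableAt two_ne_zero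
  obtain ⟨Da, hDa0, eDa⟩ := comb_deriv (w := ((0, 0, 0) : ℝ × ℝ × ℝ)) da0 da1 da2
  have ha0 : HasFDerivAt a Da (0, 0, 0) := by rw [haE]; exact hDa0
  -- derivative of I at the origin
  obtain ⟨D1, hD1, e1⟩ := comb_deriv (w := ((0, 0, 0) : ℝ × ℝ × ℝ)) dxxx dxxy dxyy
  obtain ⟨D2, hD2, e2⟩ := comb_deriv (w := ((0, 0, 0) : ℝ × ℝ × ℝ)) dyxx dyxy dyyy
  have hQ : HasFDerivAt (fun z : ℝ × ℝ × ℝ => z.2.2) QQ (0, 0, 0) := QQ.hasFDerivAt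
  have hB := hD1.add (hQ.mul hD2)
  have hI0 := hB.congr_of_eventuallyEq hIB
  -- assemble G
  have hGE : G = fun w => (a w, I w) := funext hG
  rw [hGE, (ha0.prodMk hI0).fderiv]
  have eDav := eDa (ξ, η, π')
  have e1v := e1 (ξ, η, π')
  have e2v := e2 (ξ, η, π')
  simp only [ContinuousLinearMap.prod_apply, ContinuousLinearMap.add_apply,
    ContinuousLinearMap.smul_apply, smul_eq_mul]
  rw [eDav, e1v, e2v]
  simp only [fderiv_eval2]
  have p30 : pdx (pdx (pdx f)) 0 = 0 := h30
  have p21 : pd 2 1 f 0 = pdx (pdx (pdy f)) 0 := rfl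
  have p40 : pd 4 0 f 0 = pdx (pdx (pdx (pdx f))) 0 := rfl
  have p31 : pd 3 1 f 0 = pdx (pdx (pdx (pdy f))) 0 := rfl
  have p11 : pd 1 1 f 0 = pdx (pdy f) 0 := rfl
  norm_num [QQ, Prod.ext_iff]
  rw [p21, p40, p31, p11]
  constructor
  · rw [Prod.mk_zero_zero, E1, p30]
    ring
  · rw [Prod.mk_zero_zero, E2, E1]
    ring
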